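/- arXiv:0904.3358 — 3 statements merged into one kernel-verified Lean document; each statement's English description precedes it below -/
import Mathlib

section
/- Let G be a finite group acting by ring automorphisms on a commutative ring A with |G| invertible in A. For every ideal I of the invariant subring A^G, the contraction of the extension of I equals I; that is, (I · A) ∩ A^G = I. -/
/-- The subring of `G`-invariant elements of `A`. -/
def fixedSubring (G A : Type*) [Monoid G] [CommRing A] [MulSemiringAction G A] : Subring A where
  carrier := {a | ∀ g : G, g • a = a}
  mul_mem' := by intro a b ha hb g; rw [smul_mul', ha g, hb g]
  one_mem' := fun g => smul_one g
  add_mem' := by intro a b ha hb g; rw [smul_add, ha g, hb g]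
  zero_mem' := fun g => smul_zero g
  neg_mem' := by intro a ha g; rw [smul_neg, ha g]

section Reynolds

variable (G : Type*) {A : Type*} [Group G] [Fintype G] [CommRing A]
    [MulSemiringAction G A] [Invertible ((Fintype.card G : A))]

/-- The Reynolds (averaging) operator. -/
noncomputable def reynolds (a : A) : A :=
  ⅟(Fintype.card G : A) * ∑ g : G, g • a

lemma smul_natCast_card (g : G) : g • ((Fintype.card G : A)) = (Fintype.card G : A) := by
  exact map_natCast (MulSemiringAction.toRingHom G A g) (Fintype.card G)

lemma smul_invOf_card (g : G) : g • (⅟(Fintype.card G : A)) = ⅟(Fintype.card G : A) := by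
  have h : (Fintype.card G : A) * (g • ⅟(Fintype.card G : A)) = 1 := by
    have h2 : g • ((Fintype.card G : A) * ⅟(Fintype.card G : A)) = 1 := by
      rw [mul_invOf_self, smul_one]
    rwa [smul_mul', smul_natCast_card] at h2
  exact (invOf_eq_right_inv h).symm

lemma reynolds_mem_fixed (a : A) : reynolds G a ∈ fixedSubring G A := by
  intro g
  unfold reynolds
  rw [smul_mul', smul_invOf_card, Finset.smul_sum]
  congr 1
  refine Fintype.sum_equiv (Equiv.mulLeft g) _ _ fun h => ?_
  simp [mul_smul]

lemma reynolds_of_fixed (a : A) (ha : a ∈ fixedSubring G A) : reynolds G a = a := by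
  unfold reynolds
  have : ∑ g : G, g • a = (Fintype.card G : A) * a := by
    rw [Finset.sum_congr rfl fun g _ => ha g]
    simp [Finset.sum_const, nsmul_eq_mul]
  rw [this, invOf_mul_cancel_left]

lemma reynolds_mul_fixed (a i : A) (hi : i ∈ fixedSubring G A) :
    reynolds G (a * i) = reynolds G a * i := by
  unfold reynolds
  rw [mul_assoc]
  congr 1
  rw [Finset.sum_mul]
  refine Finset.sum_congr rfl fun g _ => ?_
  rw [smul_mul', hi g]

lemma reynolds_add (a b : A) : reynolds G (a + b) = reynolds G a + reynolds G b := by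
  unfold reynolds
  rw [← mul_add, ← Finset.sum_add_distrib]
  simp [smul_add]

end Reynolds

/-- For a finite group `G` with `|G|` invertible in `A`, every ideal `I` of the invariant
subring satisfies `(I·A) ∩ A^G = I`. -/
theorem contraction_of_extension_eq (G A : Type*) [Group G] [Fintype G] [CommRing A]
    [MulSemiringAction G A] [Invertible ((Fintype.card G : A))]
    (I : Ideal (fixedSubring G A)) :
    (I.map (fixedSubring G A).subtype).comap (fixedSubring G A).subtype = I := by
  refine le_antisymm ?_ (Ideal.le_comap_map)
  intro x hx
  have hx' : (x : A) ∈ I.map (fixedSubring G A).subtype := hx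
  -- key claim: for all y in the extension, and all a : A, the Reynolds average of a*y lies in I
  have key : ∀ y ∈ I.map (fixedSubring G A).subtype, ∀ a : A,
      (⟨reynolds G (a * y), reynolds_mem_fixed G _⟩ : fixedSubring G A) ∈ I := by
    intro y hy
    refine Submodule.span_induction ?_ ?_ ?_ ?_ hy
    · rintro z hz a
      obtain ⟨i, hi, rfl⟩ := hz
      have : reynolds G (a * (i : A)) = reynolds G a * (i : A) :=
        reynolds_mul_fixed G a _ i.2
      have hmem : (⟨reynolds G a, reynolds_mem_fixed G a⟩ : fixedSubring G A) * i ∈ I :=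
        I.mul_mem_left _ hi
      convert hmem using 1
      ext
      simpa using this
    · intro a
      have : reynolds G (a * 0) = 0 := by
        rw [mul_zero]
        unfold reynolds; simp
      convert I.zero_mem using 1
      ext; simpa using this
    · intro u v _ _ hu hv a
      have : reynolds G (a * (u + v)) = reynolds G (a * u) + reynolds G (a * v) := by
        rw [mul_add, reynolds_add]
      convert I.add_mem (hu a) (hv a) using 1
      ext; simpa using this
    · intro b u _ hu a
      have : reynolds G (a * (b • u)) = reynolds G ((a * b) * u) := by
        rw [smul_eq_mul]; ring_nf
      have := hu (a * b)
      convert this using 1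
      ext
      simp only
      rw [smul_eq_mul]; ring_nf
  have := key _ hx' 1
  have hval : reynolds G (1 * (x : A)) = (x : A) := by
    rw [one_mul]; exact reynolds_of_fixed G _ x.2
  convert this using 1
  ext; simpa using hval.symm
end

section
/- Let G be a finite group acting by ring automorphisms on a commutative ring A with |G| invertible in A, and let J ⊆ A be a G-invariant ideal (i.e., g • J = J for all g ∈ G). Then the natural ring homomorphism A^G/(J ∩ A^G) → (A/J)^G is an isomorphism. -/
/-- Nagata's fundamental lemma (i): for a `G`-invariant ideal `J ⊆ A`, the natural map
`A^G/(J ∩ A^G) → (A/J)^G` is an isomorphism, i.e. the map `A^G → (A/J)^G` is surjective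
(every `G`-invariant class in `A/J` — one all of whose representatives `a` satisfy
`g • a - a ∈ J` — lifts to an invariant element of `A`) and has kernel `J ∩ A^G`. -/
theorem invariants_mod_invariant_ideal (G A : Type*) [Group G] [Fintype G] [CommRing A]
    [MulSemiringAction G A] [Invertible ((Fintype.card G : A))]
    (J : Ideal A) (hJ : ∀ (g : G), ∀ a ∈ J, g • a ∈ J) :
    (∀ x : A ⧸ J, (∀ a : A, Ideal.Quotient.mk J a = x → ∀ g : G, g • a - a ∈ J) →
      ∃ b ∈ fixedSubring G A, Ideal.Quotient.mk J b = x) ∧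
    (∀ b ∈ fixedSubring G A, (Ideal.Quotient.mk J b = 0 ↔ b ∈ J)) := by
  constructor
  · intro x hx
    obtain ⟨a, rfl⟩ := Ideal.Quotient.mk_surjective x
    have ha := hx a rfl
    set c : A := ⅟(Fintype.card G : A) with hcdef
    have hc : ∀ g : G, g • c = c := by
      intro g
      have h1 : g • ((Fintype.card G : A)) = (Fintype.card G : A) :=
        map_natCast (MulSemiringAction.toRingHom G A g) _
      have h2 : (Fintype.card G : A) * (g • c) = 1 := by
        rw [← h1, ← smul_mul', mul_invOf_self, smul_one]
      exact (invOf_eq_right_inv h2).symm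
    refine ⟨c * ∑ g : G, g • a, ?_, ?_⟩
    · intro g
      rw [smul_mul', hc g, Finset.smul_sum]
      congr 1
      simp_rw [smul_smul]
      exact Fintype.sum_equiv (Equiv.mulLeft g) _ _ (fun h => rfl)
    · rw [Ideal.Quotient.eq]
      have key : c * (∑ g : G, g • a) - a = c * ∑ g : G, (g • a - a) := by
        rw [Finset.sum_sub_distrib, mul_sub]
        congr 1
        rw [Finset.sum_const, Finset.card_univ, nsmul_eq_mul, ← mul_assoc,
          invOf_mul_self, one_mul]
      rw [key]
      exact Ideal.mul_mem_left _ _ (Ideal.sum_mem _ fun g _ => ha g)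
  · intro b _
    exact Ideal.Quotient.eq_zero_iff_mem
end

section
/- Let G be a finite group acting by ring automorphisms on a commutative ring A with |G| invertible in A, and let J ⊆ A be a G-invariant ideal. Then the natural map lim_n A^G/(Jⁿ ∩ A^G) → (lim_n A/Jⁿ)^G is an isomorphism of rings; i.e., the completion of the invariant ring along the filtration (Jⁿ ∩ A^G) is the invariant ring of the J-adic completion of A. -/
/-- The inverse limit of a tower of commutative rings `t n : R (n+1) →+* R n`, as a subring
of the product. -/
def invLim (R : ℕ → Type*) [∀ n, CommRing (R n)] (t : ∀ n, R (n + 1) →+* R n) :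
    Subring (∀ n, R n) where
  carrier := {x | ∀ n, t n (x (n + 1)) = x n}
  mul_mem' := by intro x y hx hy n; simp only [Pi.mul_apply, map_mul, hx n, hy n]
  one_mem' := by intro n; simp only [Pi.one_apply, map_one]
  add_mem' := by intro x y hx hy n; simp only [Pi.add_apply, map_add, hx n, hy n]
  zero_mem' := by intro n; simp only [Pi.zero_apply, map_zero]
  neg_mem' := by intro x hx n; simp only [Pi.neg_apply, map_neg, hx n]

/-- Completion of the invariant ring along `(Jⁿ ∩ A^G)` is the invariant ring of the
`J`-adic completion: the natural ring homomorphism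
`lim A^G/(Jⁿ ∩ A^G) → lim A/Jⁿ` (given componentwise by the maps induced by the
inclusion `A^G ⊆ A`) is injective with range exactly the `G`-invariant elements
(those all of whose componentwise representatives `a` satisfy `g • a - a ∈ Jⁿ`). -/
theorem completion_of_invariants (G A : Type*) [Group G] [Fintype G] [CommRing A]
    [MulSemiringAction G A] [Invertible ((Fintype.card G : A))]
    (J : Ideal A) (hJ : ∀ (g : G), ∀ a ∈ J, g • a ∈ J) :
    ∃ F : invLim (fun n => (fixedSubring G A) ⧸ (J ^ n).comap (fixedSubring G A).subtype)
            (fun n => Ideal.Quotient.factor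
              (Ideal.comap_mono (Ideal.pow_le_pow_right (Nat.le_succ n)))) →+*
          invLim (fun n => A ⧸ J ^ n)
            (fun n => Ideal.Quotient.factor
              (Ideal.pow_le_pow_right (Nat.le_succ n))),
      (∀ u n, (F u).1 n =
        Ideal.quotientMap (J ^ n) (fixedSubring G A).subtype le_rfl (u.1 n)) ∧
      Function.Injective F ∧
      (∀ v, ((∀ n, ∀ a : A, Ideal.Quotient.mk (J ^ n) a = v.1 n →
          ∀ g : G, g • a - a ∈ J ^ n) ↔ ∃ u, F u = v)) := by
  classical
  -- powers of J are G-invariant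
  have hJn : ∀ (n : ℕ) (g : G), ∀ a ∈ J ^ n, g • a ∈ J ^ n := by
    intro n g a ha
    have h1 : Ideal.map (MulSemiringAction.toRingHom G A g) J ≤ J :=
      Ideal.map_le_iff_le_comap.mpr fun x hx => hJ g x hx
    have h2 : Ideal.map (MulSemiringAction.toRingHom G A g) (J ^ n) ≤ J ^ n := by
      rw [Ideal.map_pow]
      exact Ideal.pow_right_mono h1 n
    exact h2 (Ideal.mem_map_of_mem _ ha)
  have hcard : ∀ (g : G), g • ((⅟(Fintype.card G : A)) : A) = ⅟(Fintype.card G : A) := by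
    intro g
    refine (invOf_eq_right_inv ?_).symm
    have h1 : g • ((Fintype.card G : A) * ⅟(Fintype.card G : A)) = (1 : A) := by
      rw [mul_invOf_self, smul_one]
    rw [smul_mul'] at h1
    rwa [show g • ((Fintype.card G : A)) = (Fintype.card G : A) from
      map_natCast (MulSemiringAction.toRingHom G A g) _] at h1
  let φ : (∀ n, fixedSubring G A ⧸ (J ^ n).comap (fixedSubring G A).subtype) →+*
      (∀ n, A ⧸ J ^ n) :=
    Pi.ringHom fun n =>
      (Ideal.quotientMap (J ^ n) (fixedSubring G A).subtype le_rfl).comp (Pi.evalRingHom _ n)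
  refine ⟨RingHom.codRestrict (φ.comp (Subring.subtype _)) _ ?_, fun u n => rfl, ?_, ?_⟩
  · -- compatibility with the tower maps
    rintro ⟨u, hu⟩ n
    obtain ⟨c, hc⟩ := Ideal.Quotient.mk_surjective (u (n + 1))
    have h1 := hu n
    simp only [φ, RingHom.comp_apply, Subring.coe_subtype, Pi.ringHom_apply,
      Pi.evalRingHom_apply]
    show Ideal.Quotient.factor (S := J ^ (n + 1)) (T := J ^ n) (Ideal.pow_le_pow_right (Nat.le_succ n))
        (Ideal.quotientMap (J ^ (n + 1)) (fixedSubring G A).subtype le_rfl (u (n + 1))) =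
      Ideal.quotientMap (J ^ n) (fixedSubring G A).subtype le_rfl (u n)
    rw [← hc] at h1 ⊢
    rw [Ideal.quotientMap_mk, Ideal.Quotient.factor_mk, ← h1, Ideal.Quotient.factor_mk,
      Ideal.quotientMap_mk]
  · -- injectivity
    rintro ⟨u, hu⟩ ⟨w, hw⟩ h
    have h2 : ∀ n, Ideal.quotientMap (J ^ n) (fixedSubring G A).subtype le_rfl (u n) =
        Ideal.quotientMap (J ^ n) (fixedSubring G A).subtype le_rfl (w n) := by
      intro n
      exact congrArg (fun x => x.1 n) h
    apply Subtype.ext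
    funext n
    obtain ⟨x, hx⟩ := Ideal.Quotient.mk_surjective (u n)
    obtain ⟨y, hy⟩ := Ideal.Quotient.mk_surjective (w n)
    have h3 := h2 n
    rw [← hx, ← hy, Ideal.quotientMap_mk, Ideal.quotientMap_mk] at h3
    have h4 : (x : A) - (y : A) ∈ J ^ n := Ideal.Quotient.eq.mp h3
    show u n = w n
    rw [← hx, ← hy]
    exact Ideal.Quotient.eq.mpr (by simpa [Ideal.mem_comap] using h4)
  · -- range characterization
    rintro ⟨v, hv⟩
    constructor
    · -- invariant element is in the range
      intro hinv
      choose a ha using fun n => Ideal.Quotient.mk_surjective (v n)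
      set b : ℕ → A := fun n => ⅟(Fintype.card G : A) * ∑ g : G, g • a n with hb
      have hbS : ∀ n, b n ∈ fixedSubring G A := by
        intro n g
        rw [hb]
        simp only
        rw [smul_mul', hcard g, Finset.smul_sum]
        congr 1
        have : ∑ h : G, g • h • a n = ∑ h : G, (g * h) • a n := by
          simp [mul_smul]
        rw [this]
        exact Fintype.sum_equiv (Equiv.mulLeft g) _ _ fun h => rfl
      have hbmk : ∀ n, Ideal.Quotient.mk (J ^ n) (b n) = v n := by
        intro n
        have hdiff : b n - a n ∈ J ^ n := by
          have h5 : b n - a n = ⅟(Fintype.card G : A) * ∑ g : G, (g • a n - a n) := by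
            rw [hb]
            simp only
            rw [Finset.sum_sub_distrib, mul_sub, Finset.sum_const, Finset.card_univ,
              nsmul_eq_mul, ← mul_assoc, invOf_mul_self, one_mul]
          rw [h5]
          exact Ideal.mul_mem_left _ _ (Ideal.sum_mem _ fun g _ =>
            hinv n (a n) (ha n) g)
        rw [← ha n]
        exact Ideal.Quotient.eq.mpr hdiff
      have hbcompat : ∀ n, (b (n + 1) : A) - b n ∈ J ^ n := by
        intro n
        apply Ideal.Quotient.eq.mp
        rw [hbmk n]
        rw [show Ideal.Quotient.mk (J ^ n) (b (n + 1)) =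
          Ideal.Quotient.factor (S := J ^ (n + 1)) (T := J ^ n)
            (Ideal.pow_le_pow_right (Nat.le_succ n))
            (Ideal.Quotient.mk (J ^ (n + 1)) (b (n + 1))) from
          (Ideal.Quotient.factor_mk _ _).symm, hbmk (n + 1)]
        exact hv n
      refine ⟨⟨fun n => Ideal.Quotient.mk _ (⟨b n, hbS n⟩ : fixedSubring G A), ?_⟩, ?_⟩
      · intro n
        rw [Ideal.Quotient.factor_mk]
        exact Ideal.Quotient.eq.mpr (by simpa [Ideal.mem_comap] using hbcompat n)
      · apply Subtype.ext
        funext n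
        show Ideal.quotientMap (J ^ n) (fixedSubring G A).subtype le_rfl
          (Ideal.Quotient.mk _ (⟨b n, hbS n⟩ : fixedSubring G A)) = v n
        rw [Ideal.quotientMap_mk]
        exact hbmk n
    · -- elements of the range are invariant
      rintro ⟨⟨u, hu⟩, hF⟩ n x hx g
      obtain ⟨c, hc⟩ := Ideal.Quotient.mk_surjective (u n)
      have h6 : v n = Ideal.Quotient.mk (J ^ n) (c : A) := by
        have := congrArg (fun w => w.1 n) hF
        simp only at this
        rw [← this]
        show Ideal.quotientMap (J ^ n) (fixedSubring G A).subtype le_rfl (u n) = _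
        rw [← hc, Ideal.quotientMap_mk]
        rfl
      have h7 : x - (c : A) ∈ J ^ n := by
        apply Ideal.Quotient.eq.mp
        rw [hx]
        exact h6
      have h8 : g • (x - (c : A)) - (x - (c : A)) ∈ J ^ n :=
        sub_mem (hJn n g _ h7) h7
      have h9 : g • (c : A) = (c : A) := c.2 g
      have h10 : g • x - x = g • (x - (c : A)) - (x - (c : A)) := by
        rw [smul_sub, h9]; ring
      rw [h10]
      exact h8
end
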